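/- Let X be a 27-element set and let a, b be equivalence relations on X, each with 9 blocks of 3 elements, such that the transitive closure of a ∪ b is an equivalence relation with 7 blocks of 3 elements and 1 block of 6 elements. Then the number of equivalence relations on X with 3 blocks of 9 elements each that contain both a and b is exactly 70. -/

import Mathlib

open scoped Classical
open Set

set_option maxHeartbeats 1000000


lemma aux_ncard_sUnion {α : Type*} {P : Set (Set α)} (hP : P.Finite)
    (hfin : ∀ s ∈ P, s.Finite) (hdisj : P.PairwiseDisjoint id) :
    (⋃₀ P).ncard = ∑ s ∈ hP.toFinset, s.ncard := by
  induction P, hP using Set.Finite.induction_on with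
  | empty => simp
  | @insert t P htP hPfin ih =>
    rw [sUnion_insert]
    have hPd : P.PairwiseDisjoint id := hdisj.subset (subset_insert _ _)
    have hfin' : ∀ s ∈ P, s.Finite := fun s hs => hfin s (mem_insert_of_mem _ hs)
    have hdisj2 : Disjoint t (⋃₀ P) := by
      rw [disjoint_sUnion_right]
      intro s hs
      exact hdisj (mem_insert _ _) (mem_insert_of_mem _ hs) (fun h => htP (h ▸ hs))
    rw [ncard_union_eq hdisj2 (hfin t (mem_insert _ _)) (hPfin.sUnion hfin')]
    rw [ih hfin' hPd]
    rw [Set.Finite.toFinset_insert, Finset.sum_insert (by simpa using htP)]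


lemma aux_ncard_subsets {α : Type*} {E : Set α} (hE : E.Finite) (k : ℕ) :
    {s : Set α | s ⊆ E ∧ s.ncard = k}.ncard = E.ncard.choose k := by
  have himg : {s : Set α | s ⊆ E ∧ s.ncard = k}
      = (fun f : Finset α => (f : Set α)) '' ↑(hE.toFinset.powersetCard k) := by
    ext s
    simp only [mem_setOf_eq, Set.mem_image, Finset.mem_coe, Finset.mem_powersetCard]
    constructor
    · rintro ⟨hsE, hsk⟩
      have hsf : s.Finite := hE.subset hsE
      refine ⟨hsf.toFinset, ⟨?_, ?_⟩, by simp⟩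
      · rw [← Finset.coe_subset]; simpa using hsE
      · rw [← hsk, ← Set.ncard_coe_finset]; simp
    · rintro ⟨f, ⟨hf1, hf2⟩, rfl⟩
      refine ⟨?_, by rw [Set.ncard_coe_finset, hf2]⟩
      intro x hx
      have := hf1 hx
      simpa using this
  rw [himg, Set.ncard_image_of_injective _ (fun f g h => by exact_mod_cast h),
    Set.ncard_coe_finset, Finset.card_powersetCard]
  congr 1
  rw [Set.ncard_eq_toFinset_card _ hE]

lemma aux_ncard_subsets_mem {α : Type*} {E : Set α} (hE : E.Finite) {x : α} (hx : x ∈ E)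
    (k : ℕ) :
    {s : Set α | s ⊆ E ∧ s.ncard = k + 1 ∧ x ∈ s}.ncard = (E.ncard - 1).choose k := by
  have himg : {s : Set α | s ⊆ E ∧ s.ncard = k + 1 ∧ x ∈ s}
      = (fun s : Set α => insert x s) '' {s : Set α | s ⊆ E \ {x} ∧ s.ncard = k} := by
    ext s
    simp only [mem_setOf_eq, Set.mem_image]
    constructor
    · rintro ⟨hsE, hsk, hxs⟩
      refine ⟨s \ {x}, ⟨fun y hy => ⟨hsE hy.1, hy.2⟩, ?_⟩, by simp [Set.insert_diff_singleton,
        Set.insert_eq_of_mem hxs]⟩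
      have hsf : s.Finite := hE.subset hsE
      rw [Set.ncard_diff_singleton_of_mem hxs, hsk]
      simp
    · rintro ⟨t, ⟨htE, htk⟩, rfl⟩
      have hxt : x ∉ t := fun h => (htE h).2 rfl
      have htf : t.Finite := (hE.subset (fun y hy => (htE hy).1))
      refine ⟨?_, ?_, Set.mem_insert _ _⟩
      · rintro y (rfl | hy)
        · exact hx
        · exact (htE hy).1
      · rw [Set.ncard_insert_of_notMem hxt htf, htk]
  rw [himg, Set.ncard_image_of_injOn, aux_ncard_subsets hE.diff k,
    Set.ncard_diff_singleton_of_mem hx]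
  · intro s hs t ht h
    have hxs : x ∉ s := fun hh => (hs.1 hh).2 rfl
    have hxt : x ∉ t := fun hh => (ht.1 hh).2 rfl
    have := congrArg (· \ ({x} : Set α)) h
    simpa [Set.insert_diff_singleton, Set.diff_singleton_eq_self hxs,
      Set.diff_singleton_eq_self hxt] using this


lemma aux_ncard_sigma {α β : Type*} {D : Set α} (hD : D.Finite) {S : α → Set β} {m : ℕ}
    (hS : ∀ t ∈ D, (S t).Finite) (h : ∀ t ∈ D, (S t).ncard = m) :
    {p : α × β | p.1 ∈ D ∧ p.2 ∈ S p.1}.ncard = D.ncard * m := by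
  revert hS h
  induction D, hD using Set.Finite.induction_on with
  | empty => simp
  | @insert a D haD hDfin ih =>
    intro hS h
    have hsplit : {p : α × β | p.1 ∈ insert a D ∧ p.2 ∈ S p.1}
        = (Prod.mk a '' S a) ∪ {p : α × β | p.1 ∈ D ∧ p.2 ∈ S p.1} := by
      ext ⟨x, y⟩
      simp only [mem_setOf_eq, Set.mem_union, Set.mem_insert_iff, Set.mem_image]
      constructor
      · rintro ⟨rfl | hx, hy⟩
        · exact Or.inl ⟨y, hy, rfl⟩
        · exact Or.inr ⟨hx, hy⟩
      · rintro (⟨z, hz, heq⟩ | ⟨hx, hy⟩)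
        · obtain ⟨rfl, rfl⟩ := Prod.mk.injEq .. ▸ heq
          exact ⟨Or.inl rfl, hz⟩
        · exact ⟨Or.inr hx, hy⟩
    have hinj : Function.Injective (Prod.mk a : β → α × β) := fun x y hxy => by
      simpa using congrArg Prod.snd hxy
    have hdisj : Disjoint (Prod.mk a '' S a) {p : α × β | p.1 ∈ D ∧ p.2 ∈ S p.1} := by
      rw [Set.disjoint_left]
      rintro ⟨x, y⟩ ⟨z, _, heq⟩ hmem
      obtain ⟨rfl, rfl⟩ := Prod.mk.injEq .. ▸ heq
      exact haD hmem.1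
    have hfin1 : (Prod.mk a '' S a).Finite := (hS a (mem_insert _ _)).image _
    have hfin2 : {p : α × β | p.1 ∈ D ∧ p.2 ∈ S p.1}.Finite := by
      have : {p : α × β | p.1 ∈ D ∧ p.2 ∈ S p.1} ⊆ D ×ˢ (⋃ t ∈ D, S t) := by
        rintro ⟨x, y⟩ ⟨hx, hy⟩
        exact ⟨hx, Set.mem_biUnion hx hy⟩
      exact ((hDfin.prod (hDfin.biUnion (fun t ht => hS t (mem_insert_of_mem _ ht)))).subset this)
    rw [hsplit, ncard_union_eq hdisj hfin1 hfin2,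
      Set.ncard_image_of_injective _ hinj,
      ih (fun t ht => hS t (mem_insert_of_mem _ ht)) (fun t ht => h t (mem_insert_of_mem _ ht)),
      h a (mem_insert _ _), ncard_insert_of_notMem haD hDfin]
    ring

theorem stmt_17 {X : Type*} [Fintype X] (hX : Fintype.card X = 27) (a b : Setoid X)
    (ha1 : a.classes.ncard = 9) (ha2 : ∀ c ∈ a.classes, c.ncard = 3)
    (hb1 : b.classes.ncard = 9) (hb2 : ∀ c ∈ b.classes, c.ncard = 3)
    (h3 : {c ∈ (a ⊔ b).classes | c.ncard = 3}.ncard = 7)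
    (h6 : {c ∈ (a ⊔ b).classes | c.ncard = 6}.ncard = 1)
    (h8 : (a ⊔ b).classes.ncard = 8) :
    {A : Setoid X | A.classes.ncard = 3 ∧ (∀ c ∈ A.classes, c.ncard = 9) ∧
        a ≤ A ∧ b ≤ A}.ncard = 70 := by
  classical
  set c : Setoid X := a ⊔ b with hc
  set C : Set (Set X) := c.classes with hCdef
  set D : Set (Set X) := {d ∈ C | d.ncard = 3} with hDdef
  have hfinX : ∀ s : Set X, s.Finite := fun s => s.toFinite
  have hfinC : ∀ s : Set (Set X), s.Finite := fun s => s.toFinite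
  have hCpart : Setoid.IsPartition C := c.isPartition_classes
  have hCdisj : C.PairwiseDisjoint id := hCpart.pairwiseDisjoint
  have hCne : ∀ d ∈ C, d.Nonempty := fun d hd => Setoid.nonempty_of_mem_partition hCpart hd
  -- distinct classes are disjoint / equal when intersecting
  have hCeq_of_inter : ∀ d ∈ C, ∀ d' ∈ C, (d ∩ d').Nonempty → d = d' := by
    intro d hd d' hd' ⟨x, hx1, hx2⟩
    exact Setoid.eq_of_mem_classes hd hx1 hd' hx2
  -- the unique 6-class
  obtain ⟨u, hU⟩ : ∃ u, {d ∈ C | d.ncard = 6} = {u} := Set.ncard_eq_one.mp h6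
  have huC : u ∈ C := by
    have : u ∈ {d ∈ C | d.ncard = 6} := hU ▸ rfl
    exact this.1
  have hu6 : u.ncard = 6 := by
    have : u ∈ {d ∈ C | d.ncard = 6} := hU ▸ rfl
    exact this.2
  have huD : u ∉ D := fun h => by
    have := h.2; rw [hu6] at this; omega
  have hD7 : D.ncard = 7 := h3
  have hCeq : C = insert u D := by
    apply (Set.eq_of_subset_of_ncard_le _ _ (hfinC C)).symm
    · exact Set.insert_subset huC (fun d hd => hd.1)
    · rw [Set.ncard_insert_of_notMem huD (hfinC D), hD7, h8]
  have hD3 : ∀ d ∈ D, d.ncard = 3 := fun d hd => hd.2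
  have hDC : D ⊆ C := fun d hd => hd.1
  -- elements and picks
  have hune : u.Nonempty := by
    rw [← Set.ncard_pos (hfinX u), hu6]; omega
  set xu : X := hune.some with hxu
  have hxuu : xu ∈ u := hune.some_mem
  have hDtne : ∀ t : Set X, (D \ {t}).Nonempty := by
    intro t
    rw [Set.nonempty_iff_ne_empty]
    intro h
    rw [Set.diff_eq_empty] at h
    have := Set.ncard_le_ncard h (Set.finite_singleton t)
    rw [hD7, Set.ncard_singleton] at this; omega
  set d0 : Set X → Set X := fun t => (hDtne t).some with hd0
  have hd0D : ∀ t, d0 t ∈ D := fun t => (hDtne t).some_mem.1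
  have hd0ne : ∀ t, d0 t ≠ t := fun t => by
    have := (hDtne t).some_mem.2; simpa using this
  have hd0nonempty : ∀ t, (d0 t).Nonempty := fun t => hCne _ (hDC (hd0D t))
  set y0 : Set X → X := fun t => (hd0nonempty t).some with hy0
  have hy0mem : ∀ t, y0 t ∈ d0 t := fun t => (hd0nonempty t).some_mem
  -- classes of A
  set cls : Setoid X → X → Set X := fun A x => {y | A y x} with hcls
  have hclsmem : ∀ (A : Setoid X) (x : X), cls A x ∈ A.classes := fun A x => A.mem_classes x
  have hclsself : ∀ (A : Setoid X) (x : X), x ∈ cls A x := fun A x => A.refl' x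
  -- key: c-classes are contained in A-classes when c ≤ A
  have hsub : ∀ (A : Setoid X), c ≤ A → ∀ d ∈ C, ∀ e ∈ A.classes,
      (d ∩ e).Nonempty → d ⊆ e := by
    intro A hA d hd e he hne
    obtain ⟨w, hw1, hw2⟩ := hne
    obtain ⟨y, rfl⟩ := hd
    obtain ⟨z, rfl⟩ := he
    intro x hx
    exact A.trans' (hA (c.trans' hx (c.symm' hw1))) hw2
  -- fibers
  set fib : Setoid X → Set X → Set (Set X) := fun A e => {d ∈ C | d ⊆ e} with hfib
  have hfibU : ∀ (A : Setoid X), c ≤ A → ∀ e ∈ A.classes, e = ⋃₀ (fib A e) := by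
    intro A hA e he
    apply Set.Subset.antisymm
    · intro x hx
      obtain ⟨d, ⟨hd, hxd⟩, -⟩ := hCpart.2 x
      exact ⟨d, ⟨hd, hsub A hA d hd e he ⟨x, hxd, hx⟩⟩, hxd⟩
    · rintro x ⟨d, hd, hxd⟩
      exact hd.2 hxd
  -- fiber counting for 9-classes
  have hfibcount : ∀ (A : Setoid X), c ≤ A → ∀ e ∈ A.classes, e.ncard = 9 →
      (u ⊆ e → {d ∈ D | d ⊆ e} = {d ∈ C | d ⊆ e} \ {u} ∧ {d ∈ D | d ⊆ e}.ncard = 1) ∧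
      (¬ u ⊆ e → fib A e ⊆ D ∧ (fib A e).ncard = 3) := by
    intro A hA e he he9
    have hfibC : fib A e ⊆ C := fun d hd => hd.1
    have hfibdisj : (fib A e).PairwiseDisjoint id := hCdisj.subset hfibC
    have hFf : (fib A e).Finite := hfinC _
    have hsum : e.ncard = ∑ s ∈ hFf.toFinset, s.ncard := by
      conv_lhs => rw [hfibU A hA e he]
      exact aux_ncard_sUnion _ (fun s _ => hfinX s) hfibdisj
    rw [he9] at hsum
    constructor
    · intro hue
      have huf : u ∈ fib A e := ⟨huC, hue⟩
      have heq : {d ∈ D | d ⊆ e} = {d ∈ C | d ⊆ e} \ {u} := by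
        ext d
        constructor
        · rintro ⟨hdD, hde⟩
          exact ⟨⟨hDC hdD, hde⟩, fun h => huD (Set.mem_singleton_iff.mp h ▸ hdD)⟩
        · rintro ⟨⟨hdC, hde⟩, hdu⟩
          rw [Set.mem_singleton_iff] at hdu
          have : d ∈ insert u D := hCeq ▸ hdC
          rcases this with h | h
          · exact absurd h hdu
          · exact ⟨h, hde⟩
      refine ⟨heq, ?_⟩
      have humem : u ∈ hFf.toFinset := hFf.mem_toFinset.mpr huf
      rw [← Finset.add_sum_erase _ _ humem, hu6] at hsum
      have hconst : ∀ s ∈ hFf.toFinset.erase u, s.ncard = 3 := by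
        intro s hs
        obtain ⟨hsu, hsF⟩ := Finset.mem_erase.mp hs
        have hsF' : s ∈ fib A e := hFf.mem_toFinset.mp hsF
        have : s ∈ insert u D := hCeq ▸ hsF'.1
        rcases this with h | h
        · exact absurd h hsu
        · exact hD3 s h
      rw [Finset.sum_congr rfl hconst, Finset.sum_const, smul_eq_mul] at hsum
      have hcard : (hFf.toFinset.erase u).card = (fib A e).ncard - 1 := by
        rw [Finset.card_erase_of_mem humem, Set.ncard_eq_toFinset_card _ hFf]
      rw [hcard] at hsum
      have hpos : 1 ≤ (fib A e).ncard := by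
        have : ({u} : Set (Set X)) ⊆ fib A e := Set.singleton_subset_iff.mpr huf
        have := Set.ncard_le_ncard this hFf
        simpa using this
      have hF2 : (fib A e).ncard = 2 := by omega
      have : ({d ∈ C | d ⊆ e} \ {u}).ncard = 1 := by
        rw [Set.ncard_diff_singleton_of_mem huf, hF2]
      rw [heq, this]
    · intro hue
      have huf : u ∉ fib A e := fun h => hue h.2
      have hFD : fib A e ⊆ D := by
        intro d hd
        have : d ∈ insert u D := hCeq ▸ hd.1
        rcases this with h | h
        · exact absurd (h ▸ hd) huf
        · exact h
      refine ⟨hFD, ?_⟩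
      have hconst : ∀ s ∈ hFf.toFinset, s.ncard = 3 := by
        intro s hs
        exact hD3 s (hFD (hFf.mem_toFinset.mp hs))
      rw [Finset.sum_congr rfl hconst, Finset.sum_const, smul_eq_mul,
        ← Set.ncard_eq_toFinset_card _ hFf] at hsum
      omega
  -- the parameterization maps
  set tfun : Setoid X → Set X :=
    fun A => if h : ∃ t, {d ∈ D | d ⊆ cls A xu} = {t} then h.choose else ∅ with htfun
  set sfun : Setoid X → Set (Set X) := fun A => {d ∈ D | d ⊆ cls A (y0 (tfun A))} with hsfun
  set Φ : Setoid X → Set X × Set (Set X) := fun A => (tfun A, sfun A) with hΦ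
  set Sset : Set X → Set (Set (Set X)) :=
    fun t => {s | s ⊆ D \ {t} ∧ s.ncard = 3 ∧ d0 t ∈ s} with hSset
  set T : Set (Set X × Set (Set X)) := {p | p.1 ∈ D ∧ p.2 ∈ Sset p.1} with hT
  set S : Set (Setoid X) := {A : Setoid X | A.classes.ncard = 3 ∧
      (∀ c ∈ A.classes, c.ncard = 9) ∧ a ≤ A ∧ b ≤ A} with hS
  have hSle : ∀ A ∈ S, c ≤ A := fun A hA => sup_le hA.2.2.1 hA.2.2.2
  -- main structural facts for A ∈ S
  have hAeq_of_inter : ∀ (A : Setoid X), ∀ e ∈ A.classes, ∀ e' ∈ A.classes,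
      (e ∩ e').Nonempty → e = e' := by
    rintro A e he e' he' ⟨x, hx1, hx2⟩
    exact Setoid.eq_of_mem_classes he hx1 he' hx2
  have hmain : ∀ A ∈ S, tfun A ∈ D ∧ sfun A ∈ Sset (tfun A) ∧
      A.classes = {u ∪ tfun A, ⋃₀ sfun A, ⋃₀ (D \ insert (tfun A) (sfun A))} := by
    intro A hA
    have hcle : c ≤ A := hSle A hA
    obtain ⟨hA3, hA9, -, -⟩ := hA
    -- the class containing u
    set e1 : Set X := cls A xu with he1def
    have he1 : e1 ∈ A.classes := hclsmem A xu
    have hue1 : u ⊆ e1 := hsub A hcle u huC e1 he1 ⟨xu, hxuu, hclsself A xu⟩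
    obtain ⟨heq1, hcnt1⟩ := (hfibcount A hcle e1 he1 (hA9 e1 he1)).1 hue1
    obtain ⟨t', ht'⟩ := Set.ncard_eq_one.mp hcnt1
    have hex : ∃ t, {d ∈ D | d ⊆ cls A xu} = {t} := ⟨t', ht'⟩
    have htA : tfun A = hex.choose := dif_pos hex
    have hspec : {d ∈ D | d ⊆ e1} = {tfun A} := htA ▸ hex.choose_spec
    set t : Set X := tfun A with htdef
    have htmem : t ∈ {d ∈ D | d ⊆ e1} := hspec ▸ rfl
    have htD : t ∈ D := htmem.1
    have hte1 : t ⊆ e1 := htmem.2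
    have htne : t.Nonempty := hCne t (hDC htD)
    -- the class containing d0 t
    set e2 : Set X := cls A (y0 t) with he2def
    have he2 : e2 ∈ A.classes := hclsmem A (y0 t)
    have hd2e2 : d0 t ⊆ e2 :=
      hsub A hcle (d0 t) (hDC (hd0D t)) e2 he2 ⟨y0 t, hy0mem t, hclsself A (y0 t)⟩
    have he12 : e1 ≠ e2 := by
      intro h
      have : d0 t ∈ {d ∈ D | d ⊆ e1} := ⟨hd0D t, h ▸ hd2e2⟩
      rw [hspec, Set.mem_singleton_iff] at this
      exact hd0ne t this
    have hnue2 : ¬ u ⊆ e2 := by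
      intro h
      obtain ⟨x, hx⟩ := hune
      exact he12 (hAeq_of_inter A e1 he1 e2 he2 ⟨x, hue1 hx, h hx⟩)
    obtain ⟨hfD2, hcnt2⟩ := (hfibcount A hcle e2 he2 (hA9 e2 he2)).2 hnue2
    have hsfib : sfun A = fib A e2 := by
      ext d
      constructor
      · rintro ⟨hdD, hde⟩
        exact ⟨hDC hdD, hde⟩
      · intro hd
        exact ⟨hfD2 hd, hd.2⟩
    have hs3 : (sfun A).ncard = 3 := by rw [hsfib]; exact hcnt2
    have hd2s : d0 t ∈ sfun A := ⟨hd0D t, hd2e2⟩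
    have htns : t ∉ sfun A := by
      rintro ⟨-, hte2⟩
      obtain ⟨x, hx⟩ := htne
      exact he12 (hAeq_of_inter A e1 he1 e2 he2 ⟨x, hte1 hx, hte2 hx⟩)
    have hsD : sfun A ⊆ D \ {t} := by
      rintro d ⟨hdD, hde⟩
      refine ⟨hdD, fun h => htns ?_⟩
      rw [Set.mem_singleton_iff] at h
      exact h ▸ ⟨hdD, hde⟩
    refine ⟨htD, ⟨hsD, hs3, hd2s⟩, ?_⟩
    -- the third class
    have hsubpair : {e1, e2} ⊆ A.classes := by
      rintro e (rfl | rfl)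
      · exact he1
      · exact he2
    have hpair2 : ({e1, e2} : Set (Set X)).ncard = 2 := Set.ncard_pair he12
    have hdiff1 : (A.classes \ {e1, e2}).ncard = 1 := by
      rw [Set.ncard_diff hsubpair (hfinC _), hpair2, hA3]
    obtain ⟨e3, he3eq⟩ := Set.ncard_eq_one.mp hdiff1
    have he3mem : e3 ∈ A.classes \ {e1, e2} := he3eq ▸ rfl
    have he3 : e3 ∈ A.classes := he3mem.1
    have he31 : e3 ≠ e1 := fun h => he3mem.2 (by rw [h]; exact Or.inl rfl)
    have he32 : e3 ≠ e2 := fun h => he3mem.2 (by rw [h]; exact Or.inr rfl)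
    have hclasses : A.classes = {e1, e2, e3} := by
      have h1 : A.classes = {e1, e2} ∪ (A.classes \ {e1, e2}) :=
        (Set.union_diff_cancel hsubpair).symm
      rw [h1, he3eq]
      ext x
      simp only [Set.mem_union, Set.mem_insert_iff, Set.mem_singleton_iff]
      tauto
    -- fibers
    have hfib1 : fib A e1 = {u, t} := by
      ext d
      constructor
      · rintro ⟨hdC, hde⟩
        have : d ∈ insert u D := hCeq ▸ hdC
        rcases this with h | h
        · exact Or.inl h
        · have : d ∈ {d ∈ D | d ⊆ e1} := ⟨h, hde⟩
          rw [hspec] at this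
          exact Or.inr this
      · rintro (rfl | rfl)
        · exact ⟨huC, hue1⟩
        · exact ⟨hDC htD, hte1⟩
    have hfib3 : fib A e3 = D \ insert t (sfun A) := by
      ext d
      constructor
      · rintro ⟨hdC, hde⟩
        have hdne : d.Nonempty := hCne d hdC
        obtain ⟨x, hx⟩ := hdne
        have hdD : d ∈ D := by
          have : d ∈ insert u D := hCeq ▸ hdC
          rcases this with rfl | h
          · exact absurd (hAeq_of_inter A e3 he3 e1 he1 ⟨x, hde hx, hue1 hx⟩) he31
          · exact h
        refine ⟨hdD, ?_⟩
        rintro (rfl | hds)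
        · exact he31 (hAeq_of_inter A e3 he3 e1 he1 ⟨x, hde hx, hte1 hx⟩)
        · exact he32 (hAeq_of_inter A e3 he3 e2 he2 ⟨x, hde hx, hds.2 hx⟩)
      · rintro ⟨hdD, hdn⟩
        have hdC : d ∈ C := hDC hdD
        obtain ⟨x, hx⟩ := hCne d hdC
        have hde : d ⊆ cls A x := hsub A hcle d hdC _ (hclsmem A x) ⟨x, hx, hclsself A x⟩
        have hmem : cls A x ∈ A.classes := hclsmem A x
        rw [hclasses] at hmem
        rcases hmem with h | h | h
        · exfalso
          apply hdn
          left
          have : d ∈ {d ∈ D | d ⊆ e1} := ⟨hdD, by rw [← h]; exact hde⟩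
          rw [hspec] at this
          exact this
        · refine absurd (?_ : d ∈ sfun A) (fun hh => hdn (Or.inr hh))
          refine ⟨hdD, ?_⟩
          show d ⊆ e2
          rw [← h]; exact hde
        · refine ⟨hdC, ?_⟩
          rw [← h]; exact hde
    have hce1 : e1 = u ∪ t := by
      rw [hfibU A hcle e1 he1, hfib1, Set.sUnion_pair]
    have hce2 : e2 = ⋃₀ sfun A := by
      rw [hfibU A hcle e2 he2, hsfib]
    have hce3 : e3 = ⋃₀ (D \ insert t (sfun A)) := by
      rw [hfibU A hcle e3 he3, hfib3]
    rw [hclasses, hce1, hce2, hce3]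
  -- surjectivity
  have hsurj : ∀ p ∈ T, ∃ A ∈ S, Φ A = p := by
    rintro ⟨t, s⟩ ⟨htD, hsDt, hs3, hd0s⟩
    have hsD : s ⊆ D := fun d hd => (hsDt hd).1
    have hts : t ∉ s := fun h => (hsDt h).2 rfl
    have htC : t ∈ C := hDC htD
    have htne : t.Nonempty := hCne t htC
    set I1 : Set (Set X) := {u, t} with hI1
    set R : Set (Set X) := D \ insert t s with hR
    set B1 : Set X := ⋃₀ I1 with hB1def
    set B2 : Set X := ⋃₀ s with hB2def
    set B3 : Set X := ⋃₀ R with hB3def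
    set P : Set (Set X) := {B1, B2, B3} with hPdef
    have hI1C : I1 ⊆ C := by
      rintro d (rfl | rfl)
      · exact huC
      · exact htC
    have hRD : R ⊆ D := fun d hd => hd.1
    have hins_sub : insert t s ⊆ D := Set.insert_subset htD hsD
    have hins4 : (insert t s).ncard = 4 := by
      rw [Set.ncard_insert_of_notMem hts (hfinC s), hs3]
    have hR3 : R.ncard = 3 := by
      rw [hR, Set.ncard_diff hins_sub, hins4, hD7]
    have hRne : R.Nonempty := by
      rw [← Set.ncard_pos (hfinC R), hR3]; omega
    -- index sets are pairwise disjoint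
    have hI12 : ∀ d, d ∈ I1 → d ∉ s := by
      rintro d (rfl | rfl)
      · exact fun h => huD (hsD h)
      · exact hts
    have hI13 : ∀ d, d ∈ I1 → d ∉ R := by
      rintro d (rfl | rfl)
      · exact fun h => huD (hRD h)
      · exact fun h => h.2 (Or.inl rfl)
    have hI23 : ∀ d, d ∈ s → d ∉ R := fun d hd h => h.2 (Or.inr hd)
    have hcover : ∀ d ∈ C, d ∈ I1 ∨ d ∈ s ∨ d ∈ R := by
      intro d hdC
      have : d ∈ insert u D := hCeq ▸ hdC
      rcases this with rfl | hdD
      · exact Or.inl (Or.inl rfl)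
      · by_cases h1 : d = t
        · exact Or.inl (Or.inr (by rw [h1]; exact rfl))
        · by_cases h2 : d ∈ s
          · exact Or.inr (Or.inl h2)
          · refine Or.inr (Or.inr ⟨hdD, ?_⟩)
            rintro (h | h)
            · exact h1 h
            · exact h2 h
    -- disjointness of the unions
    have hdisjU : ∀ I J : Set (Set X), I ⊆ C → J ⊆ C → (∀ d, d ∈ I → d ∉ J) →
        Disjoint (⋃₀ I) (⋃₀ J) := by
      intro I J hIC hJC hIJ
      rw [Set.disjoint_sUnion_left]
      intro d hd
      rw [Set.disjoint_sUnion_right]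
      intro d' hd'
      exact hCdisj (hIC hd) (hJC hd') (fun h => hIJ d hd (h ▸ hd'))
    have hd12 : Disjoint B1 B2 := hdisjU I1 s hI1C (hsD.trans hDC) hI12
    have hd13 : Disjoint B1 B3 := hdisjU I1 R hI1C ((hRD.trans hDC)) hI13
    have hd23 : Disjoint B2 B3 := hdisjU s R (hsD.trans hDC) (hRD.trans hDC) hI23
    -- nonemptiness
    have hB1ne : B1.Nonempty := by
      obtain ⟨x, hx⟩ := hune
      exact ⟨x, u, Or.inl rfl, hx⟩
    have hB2ne : B2.Nonempty := by
      obtain ⟨x, hx⟩ := hCne (d0 t) (hDC (hd0D t))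
      exact ⟨x, d0 t, hd0s, hx⟩
    have hB3ne : B3.Nonempty := by
      obtain ⟨d, hd⟩ := hRne
      obtain ⟨x, hx⟩ := hCne d (hDC (hRD hd))
      exact ⟨x, d, hd, hx⟩
    -- P is a partition
    have hPdisj : ∀ B ∈ P, ∀ B' ∈ P, B ≠ B' → Disjoint B B' := by
      rintro B (rfl | rfl | rfl) B' (rfl | rfl | rfl) hne
      all_goals first
        | exact absurd rfl hne
        | exact hd12 | exact hd12.symm | exact hd13 | exact hd13.symm
        | exact hd23 | exact hd23.symm
    have hP : Setoid.IsPartition P := by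
      constructor
      · rintro (h | h | h)
        · exact hB1ne.ne_empty h.symm
        · exact hB2ne.ne_empty h.symm
        · exact hB3ne.ne_empty h.symm
      · intro x
        obtain ⟨d, ⟨hdC, hxd⟩, -⟩ := hCpart.2 x
        have hxB : ∃ B ∈ P, x ∈ B := by
          rcases hcover d hdC with h | h | h
          · exact ⟨B1, Or.inl rfl, d, h, hxd⟩
          · exact ⟨B2, Or.inr (Or.inl rfl), d, h, hxd⟩
          · exact ⟨B3, Or.inr (Or.inr rfl), d, h, hxd⟩
        obtain ⟨B, hBP, hxB⟩ := hxB
        refine ⟨B, ⟨hBP, hxB⟩, ?_⟩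
        rintro B' ⟨hB'P, hxB'⟩
        by_contra hne
        exact Set.disjoint_left.mp (hPdisj B' hB'P B hBP hne) hxB' hxB
    set A : Setoid X := Setoid.mkClasses P hP.2 with hAdef
    have hAc : A.classes = P := Setoid.classes_mkClasses P hP
    -- block determination
    have hblock : ∀ (x : X), ∀ B ∈ P, x ∈ B → cls A x = B := by
      intro x B hB hxB
      obtain ⟨B', ⟨hB'P, hxB'⟩, huB⟩ := hP.2 x
      have h1 : cls A x = B' := huB _ ⟨hAc ▸ hclsmem A x, hclsself A x⟩
      have h2 : B = B' := huB _ ⟨hB, hxB⟩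
      rw [h1, h2]
    -- c ≤ A
    have hcleA : c ≤ A := by
      intro x y hxy
      have hdC : {z | c z y} ∈ C := c.mem_classes y
      have hxd : x ∈ {z | c z y} := hxy
      have hyd : y ∈ {z | c z y} := c.refl' y
      have hdB : ∃ B ∈ P, {z | c z y} ⊆ B := by
        rcases hcover _ hdC with h | h | h
        · exact ⟨B1, Or.inl rfl, Set.subset_sUnion_of_mem h⟩
        · exact ⟨B2, Or.inr (Or.inl rfl), Set.subset_sUnion_of_mem h⟩
        · exact ⟨B3, Or.inr (Or.inr rfl), Set.subset_sUnion_of_mem h⟩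
      obtain ⟨B, hBP, hdB⟩ := hdB
      show ∀ e ∈ P, x ∈ e → y ∈ e
      intro e heP hxe
      obtain ⟨B', ⟨hB'P, hxB'⟩, huB⟩ := hP.2 x
      have h1 : e = B' := huB _ ⟨heP, hxe⟩
      have h2 : B = B' := huB _ ⟨hBP, hdB hxd⟩
      rw [h1, ← h2]
      exact hdB hyd
    -- cardinalities
    have hcard_sUnion : ∀ I : Set (Set X), I ⊆ D → (⋃₀ I).ncard = 3 * I.ncard := by
      intro I hID
      have h := aux_ncard_sUnion (hfinC I) (fun x _ => hfinX x)
        (hCdisj.subset (hID.trans hDC))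
      rw [h, Finset.sum_congr rfl (fun d hd => hD3 d (hID ((hfinC I).mem_toFinset.mp hd))),
        Finset.sum_const, smul_eq_mul, ← Set.ncard_eq_toFinset_card _ (hfinC I)]
      ring
    have hB1c : B1.ncard = 9 := by
      have hdut : Disjoint u t := hCdisj huC htC (fun h => huD (h ▸ htD))
      rw [hB1def, hI1, Set.sUnion_pair, Set.ncard_union_eq hdut (hfinX u) (hfinX t),
        hu6, hD3 t htD]
    have hB2c : B2.ncard = 9 := by rw [hB2def, hcard_sUnion s hsD, hs3]
    have hB3c : B3.ncard = 9 := by rw [hB3def, hcard_sUnion R hRD, hR3]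
    have hne12 : B1 ≠ B2 := fun h => by
      obtain ⟨x, hx⟩ := hB1ne
      exact Set.disjoint_left.mp hd12 hx (h ▸ hx)
    have hne13 : B1 ≠ B3 := fun h => by
      obtain ⟨x, hx⟩ := hB1ne
      exact Set.disjoint_left.mp hd13 hx (h ▸ hx)
    have hne23 : B2 ≠ B3 := fun h => by
      obtain ⟨x, hx⟩ := hB2ne
      exact Set.disjoint_left.mp hd23 hx (h ▸ hx)
    have hP3 : P.ncard = 3 := by
      rw [hPdef, Set.ncard_insert_of_notMem (by
          rintro (h | h)
          · exact hne12 h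
          · exact hne13 h) (hfinC _),
        Set.ncard_insert_of_notMem (by
          rintro h
          exact hne23 (Set.mem_singleton_iff.mp h)) (hfinC _),
        Set.ncard_singleton]
    have hAS : A ∈ S := by
      refine ⟨by rw [hAc]; exact hP3, ?_, le_sup_left.trans hcleA, le_sup_right.trans hcleA⟩
      intro e he
      rw [hAc] at he
      rcases he with rfl | rfl | rfl
      · exact hB1c
      · exact hB2c
      · exact hB3c
    refine ⟨A, hAS, ?_⟩
    -- compute tfun A
    have hxuB1 : xu ∈ B1 := ⟨u, Or.inl rfl, hxuu⟩
    have hcls1 : cls A xu = B1 := hblock xu B1 (Or.inl rfl) hxuB1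
    have hfibB1 : {d ∈ D | d ⊆ cls A xu} = {t} := by
      rw [hcls1]
      ext d
      constructor
      · rintro ⟨hdD, hdB⟩
        obtain ⟨x, hx⟩ := hCne d (hDC hdD)
        rcases hdB hx with ⟨d', hd', hxd'⟩
        have : d = d' := hCeq_of_inter d (hDC hdD) d' (hI1C hd') ⟨x, hx, hxd'⟩
        rcases hd' with rfl | rfl
        · exact absurd (this ▸ hdD) (this ▸ huD)
        · exact this
      · rintro rfl
        exact ⟨htD, Set.subset_sUnion_of_mem (Or.inr rfl)⟩
    have hex : ∃ t', {d ∈ D | d ⊆ cls A xu} = {t'} := ⟨t, hfibB1⟩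
    have htfunA : tfun A = t := by
      have h1 : tfun A = hex.choose := dif_pos hex
      have h2 : ({hex.choose} : Set (Set X)) = {t} := hex.choose_spec.symm.trans hfibB1
      rw [h1, Set.singleton_eq_singleton_iff.mp h2]
    -- compute sfun A
    have hy0B2 : y0 t ∈ B2 := ⟨d0 t, hd0s, hy0mem t⟩
    have hcls2 : cls A (y0 t) = B2 := hblock (y0 t) B2 (Or.inr (Or.inl rfl)) hy0B2
    have hsfunA : sfun A = s := by
      rw [hsfun]
      simp only [htfunA]
      rw [hcls2]
      ext d
      constructor
      · rintro ⟨hdD, hdB⟩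
        obtain ⟨x, hx⟩ := hCne d (hDC hdD)
        rcases hdB hx with ⟨d', hd', hxd'⟩
        have : d = d' := hCeq_of_inter d (hDC hdD) d' (hDC (hsD hd')) ⟨x, hx, hxd'⟩
        exact this ▸ hd'
      · intro hd
        exact ⟨hsD hd, Set.subset_sUnion_of_mem hd⟩
    rw [hΦ]
    simp only [Prod.mk.injEq]
    exact ⟨htfunA, hsfunA⟩
  -- injectivity
  have hinj : Set.InjOn Φ S := by
    intro A hA A' hA' h
    have h1 := (hmain A hA).2.2
    have h2 := (hmain A' hA').2.2
    rw [Setoid.classes_inj, h1, h2]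
    rw [hΦ] at h
    simp only [Prod.mk.injEq] at h
    rw [h.1, h.2]
  have himg : Φ '' S = T := by
    apply Set.Subset.antisymm
    · rintro p ⟨A, hA, rfl⟩
      obtain ⟨h1, h2, _⟩ := hmain A hA
      exact ⟨h1, h2⟩
    · intro p hp
      obtain ⟨A, hA, hAp⟩ := hsurj p hp
      exact ⟨A, hA, hAp⟩
  -- counting T
  have hTcount : T.ncard = 70 := by
    have hseach : ∀ t ∈ D, (Sset t).ncard = 10 := by
      intro t ht
      have hE : (D \ {t}).Finite := hfinC _
      have hx : d0 t ∈ D \ {t} := (hDtne t).some_mem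
      have h1 := aux_ncard_subsets_mem hE hx 2
      rw [Set.ncard_diff_singleton_of_mem ht, hD7] at h1
      have hset : Sset t = {s : Set (Set X) | s ⊆ D \ {t} ∧ s.ncard = 2 + 1 ∧ d0 t ∈ s} := by
        rw [hSset]
      rw [hset, h1]
      decide
    have hsig := aux_ncard_sigma (hfinC D) (S := Sset) (m := 10)
      (fun t _ => Set.toFinite _) hseach
    rw [hT, hsig, hD7]
  rw [← hTcount, ← himg, Set.ncard_image_of_injOn hinj]
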